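/- Suppose (U_m, V_m) is a solution of the coupled system U'' + 2U²V + (1/3)yU = 0, V'' + 2UV² + (1/3)yV = 0 meromorphic near y₀ with a simple pole at y₀, with Laurent expansions U_m(y) = k[1/(y-y₀) + (y₀/18)(y-y₀) + (1/12 + ω)(y-y₀)² + O((y-y₀)³)] and V_m(y) = -k^{-1}[1/(y-y₀) + (y₀/18)(y-y₀) + (1/12 - ω)(y-y₀)² + O((y-y₀)³)] for constants k ≠ 0 and ω. Then the function V_{m+1}(y) := 1/U_m(y) has a removable singularity at y₀ and extends analytically with a simple zero at y = y₀; likewise U_{m-1}(y) := 1/V_m(y) extends analytically with a simple zero at y₀. -/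

import Mathlib

open Filter Topology

lemma aux_confine (U : ℂ → ℂ) (y₀ c a b : ℂ) (hc : c ≠ 0) (R : ℂ → ℂ)
    (hR : AnalyticAt ℂ R y₀)
    (h : ∀ᶠ y in 𝓝[≠] y₀,
      U y = c * ((y - y₀)⁻¹ + a * (y - y₀) + b * (y - y₀) ^ 2 + R y * (y - y₀) ^ 3)) :
    ∃ W : ℂ → ℂ, AnalyticAt ℂ W y₀ ∧ W y₀ = 0 ∧ deriv W y₀ ≠ 0 ∧
      ∀ᶠ y in 𝓝[≠] y₀, W y = (U y)⁻¹ := by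
  set G : ℂ → ℂ := fun y =>
    c * (1 + a * (y - y₀) ^ 2 + b * (y - y₀) ^ 3 + R y * (y - y₀) ^ 4) with hGdef
  have hGan : AnalyticAt ℂ G y₀ := by
    apply AnalyticAt.mul (analyticAt_const)
    apply AnalyticAt.add
    apply AnalyticAt.add
    apply AnalyticAt.add analyticAt_const
    · exact analyticAt_const.mul (((analyticAt_id : AnalyticAt ℂ _ y₀).sub analyticAt_const).pow 2)
    · exact analyticAt_const.mul (((analyticAt_id : AnalyticAt ℂ _ y₀).sub analyticAt_const).pow 3)
    · exact hR.mul (((analyticAt_id : AnalyticAt ℂ _ y₀).sub analyticAt_const).pow 4)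
  have hG0 : G y₀ = c := by simp [hGdef]
  have hGne : G y₀ ≠ 0 := by rw [hG0]; exact hc
  have hGinv : AnalyticAt ℂ (fun y => (G y)⁻¹) y₀ := hGan.inv hGne
  refine ⟨fun y => (y - y₀) * (G y)⁻¹, ?_, by simp, ?_, ?_⟩
  · exact ((analyticAt_id : AnalyticAt ℂ _ y₀).sub analyticAt_const).mul hGinv
  · have h1 : HasDerivAt (fun y : ℂ => y - y₀) 1 y₀ := (hasDerivAt_id y₀).sub_const y₀
    obtain ⟨d, h2⟩ : DifferentiableAt ℂ (fun y => (G y)⁻¹) y₀ :=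
      hGinv.differentiableAt
    have := (h1.mul (hGinv.differentiableAt.hasDerivAt)).deriv
    rw [show (fun y => (y - y₀) * (G y)⁻¹) = ((fun y => y - y₀) * fun y => (G y)⁻¹) from rfl, this]
    simp [hG0, hc]
  · filter_upwards [h, self_mem_nhdsWithin] with y hy hyne
    have hsub : y - y₀ ≠ 0 := sub_ne_zero.mpr hyne
    have : U y = G y * (y - y₀)⁻¹ := by
      rw [hy, hGdef]; field_simp
    rw [this]
    conv_rhs => rw [mul_inv, inv_inv]
    exact mul_comm _ _

/-- singularity confinement — if `(U, V)` solves the coupled Painlevé-II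
system near `y₀` with the stated simple-pole Laurent expansions, then `1/U` and `1/V`
extend analytically to `y₀` with simple zeros there. -/
theorem stmt_18 (U V : ℂ → ℂ) (y₀ k ω : ℂ) (hk : k ≠ 0)
    (hU : ∃ RU : ℂ → ℂ, AnalyticAt ℂ RU y₀ ∧ ∀ᶠ y in 𝓝[≠] y₀,
      U y = k * ((y - y₀)⁻¹ + (y₀ / 18) * (y - y₀) + (1 / 12 + ω) * (y - y₀) ^ 2
        + RU y * (y - y₀) ^ 3))
    (hV : ∃ RV : ℂ → ℂ, AnalyticAt ℂ RV y₀ ∧ ∀ᶠ y in 𝓝[≠] y₀,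
      V y = -k⁻¹ * ((y - y₀)⁻¹ + (y₀ / 18) * (y - y₀) + (1 / 12 - ω) * (y - y₀) ^ 2
        + RV y * (y - y₀) ^ 3))
    (hode1 : ∀ᶠ y in 𝓝[≠] y₀,
      deriv (deriv U) y + 2 * U y ^ 2 * V y + (1 / 3) * y * U y = 0)
    (hode2 : ∀ᶠ y in 𝓝[≠] y₀,
      deriv (deriv V) y + 2 * U y * V y ^ 2 + (1 / 3) * y * V y = 0) :
    (∃ W : ℂ → ℂ, AnalyticAt ℂ W y₀ ∧ W y₀ = 0 ∧ deriv W y₀ ≠ 0 ∧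
      ∀ᶠ y in 𝓝[≠] y₀, W y = (U y)⁻¹) ∧
    (∃ W : ℂ → ℂ, AnalyticAt ℂ W y₀ ∧ W y₀ = 0 ∧ deriv W y₀ ≠ 0 ∧
      ∀ᶠ y in 𝓝[≠] y₀, W y = (V y)⁻¹) := by
  obtain ⟨RU, hRU, hUeq⟩ := hU
  obtain ⟨RV, hRV, hVeq⟩ := hV
  exact ⟨aux_confine U y₀ k _ _ hk RU hRU hUeq,
    aux_confine V y₀ (-k⁻¹) _ _ (by simp [hk]) RV hRV hVeq⟩
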